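/- Let a, b be positive real numbers with 0 ≤ b − a < 1, set h = (1 − (a−b)²)/(1 + (a−b)² + 2(a+b)) and t = (√((1+a+b)((a−b)² + a + b)) − √b·(1−a+b)) / √(a·(1 + (a−b)² + 2(a+b))). Then: (i) 2t/(1+t²) = √( a(1 + (a−b)² + 2(a+b)) / ((1+a+b)((a−b)² + a + b)) ); (ii) (1−t²)/(1+t²) = √( b / ((1+a+b)((a−b)² + a + b)) )·(1−a+b); (iii) (t²−1)/√((1−t²)² + 4h²t²) = −√( b(1 + (a−b)² + 2(a+b)) / ((1+a+b)((a−b)² + a + b)) ); (iv) 2ht/√((1−t²)² + 4h²t²) = √( a / ((1+a+b)((a−b)² + a + b)) )·(1+a−b). -/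

import Mathlib

/-- the four identities giving `sin ρ`, `cos ρ`, `sin ρ̃`, `cos ρ̃`
in terms of the rational parameters `a`, `b`. -/
theorem stmt9 (a b : ℝ) (ha : 0 < a) (hb : 0 < b)
    (hab1 : 0 ≤ b - a) (hab2 : b - a < 1)
    (h t : ℝ)
    (hdef : h = (1 - (a - b) ^ 2) / (1 + (a - b) ^ 2 + 2 * (a + b)))
    (tdef : t = (Real.sqrt ((1 + a + b) * ((a - b) ^ 2 + a + b))
        - Real.sqrt b * (1 - a + b)) / Real.sqrt (a * (1 + (a - b) ^ 2 + 2 * (a + b)))) :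
    2 * t / (1 + t ^ 2)
        = Real.sqrt (a * (1 + (a - b) ^ 2 + 2 * (a + b))
            / ((1 + a + b) * ((a - b) ^ 2 + a + b))) ∧
    (1 - t ^ 2) / (1 + t ^ 2)
        = Real.sqrt (b / ((1 + a + b) * ((a - b) ^ 2 + a + b))) * (1 - a + b) ∧
    (t ^ 2 - 1) / Real.sqrt ((1 - t ^ 2) ^ 2 + 4 * h ^ 2 * t ^ 2)
        = -Real.sqrt (b * (1 + (a - b) ^ 2 + 2 * (a + b))
            / ((1 + a + b) * ((a - b) ^ 2 + a + b))) ∧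
    2 * h * t / Real.sqrt ((1 - t ^ 2) ^ 2 + 4 * h ^ 2 * t ^ 2)
        = Real.sqrt (a / ((1 + a + b) * ((a - b) ^ 2 + a + b))) * (1 + a - b) := by
  set R : ℝ := 1 + (a - b) ^ 2 + 2 * (a + b) with hRdef
  set P : ℝ := (1 + a + b) * ((a - b) ^ 2 + a + b) with hPdef
  have hR : 0 < R := by positivity
  have hP : 0 < P := by
    have h1 : 0 < 1 + a + b := by linarith
    have h2 : 0 < (a - b) ^ 2 + a + b := by positivity
    positivity
  have hQ : 0 < a * R := by positivity
  have h1d : 0 < 1 - a + b := by linarith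
  have h1pd : 0 < 1 + a - b := by linarith
  set sp := Real.sqrt P with hspdef
  set sq := Real.sqrt (a * R) with hsqdef
  set sb := Real.sqrt b with hsbdef
  set sr := Real.sqrt R with hsrdef
  set sa := Real.sqrt a with hsadef
  have hsp2 : sp ^ 2 = P := Real.sq_sqrt hP.le
  have hsq2 : sq ^ 2 = a * R := Real.sq_sqrt hQ.le
  have hsb2 : sb ^ 2 = b := Real.sq_sqrt hb.le
  have hsr2 : sr ^ 2 = R := Real.sq_sqrt hR.le
  have hsa2 : sa ^ 2 = a := Real.sq_sqrt ha.le
  have hsp : 0 < sp := Real.sqrt_pos.mpr hP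
  have hsq : 0 < sq := Real.sqrt_pos.mpr hQ
  have hsb : 0 < sb := Real.sqrt_pos.mpr hb
  have hsr : 0 < sr := Real.sqrt_pos.mpr hR
  have hsa : 0 < sa := Real.sqrt_pos.mpr ha
  have keyQ : a * R = P - b * (1 - a + b) ^ 2 := by rw [hRdef, hPdef]; ring
  have keyB : b * R = P - a * (1 + a - b) ^ 2 := by rw [hRdef, hPdef]; ring
  have hsqsasr : sq = sa * sr := Real.sqrt_mul ha.le R
  set u : ℝ := sp - sb * (1 - a + b) with hudef
  have hu : 0 < u := by
    have h1 : sb * (1 - a + b) = Real.sqrt (b * (1 - a + b) ^ 2) := by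
      rw [Real.sqrt_mul hb.le, Real.sqrt_sq h1d.le]
    have h2 : b * (1 - a + b) ^ 2 < P := by nlinarith [keyQ, hQ]
    have h3 : Real.sqrt (b * (1 - a + b) ^ 2) < sp := by
      apply Real.sqrt_lt_sqrt (by positivity) h2
    rw [hudef, sub_pos, h1]; exact h3
  have ht : t = u / sq := tdef
  have ht2 : t ^ 2 = u ^ 2 / (a * R) := by
    rw [ht, div_pow, hsq2]
  have hQu : a * R + u ^ 2 = 2 * sp * u := by
    rw [hudef]; linear_combination keyQ - hsp2 + (1 - a + b) ^ 2 * hsb2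
  have hQmu : a * R - u ^ 2 = 2 * sb * (1 - a + b) * u := by
    rw [hudef]; linear_combination keyQ - hsp2 + (1 - a + b) ^ 2 * hsb2
  have h1pt2 : 1 + t ^ 2 = 2 * sp * u / (a * R) := by
    rw [ht2, ← hQu]; field_simp
  have h1mt2 : 1 - t ^ 2 = 2 * sb * (1 - a + b) * u / (a * R) := by
    rw [ht2, ← hQmu]; field_simp
  have key3 : b * (1 - a + b) ^ 2 * R + (1 - (a - b) ^ 2) ^ 2 * a = (1 - a + b) ^ 2 * P := by
    linear_combination (1 - a + b) ^ 2 * keyB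
  clear_value R P sp sq sb sr sa u
  have hDval : (1 - t ^ 2) ^ 2 + 4 * h ^ 2 * t ^ 2
      = (2 * (1 - a + b) * u * sp / ((a * R) * sr)) ^ 2 := by
    rw [h1mt2, ht2, hdef]
    field_simp
    linear_combination (4*(1-a+b)^2*R*sr^2) * hsb2
      + (4*(b*(1-a+b)^2*R + a*(1-(a-b)^2)^2)) * hsr2
      + (4*R) * key3 - (4*(1-a+b)^2*R) * hsp2
  have hDpos : 0 < 2 * (1 - a + b) * u * sp / ((a * R) * sr) := by positivity
  have hD : Real.sqrt ((1 - t ^ 2) ^ 2 + 4 * h ^ 2 * t ^ 2)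
      = 2 * (1 - a + b) * u * sp / ((a * R) * sr) := by
    rw [hDval, Real.sqrt_sq hDpos.le]
  refine ⟨?_, ?_, ?_, ?_⟩
  · rw [h1pt2, ht, Real.sqrt_div hQ.le, ← hsqdef, ← hspdef]
    field_simp
    linear_combination (-1) * hsq2
  · rw [h1mt2, h1pt2, Real.sqrt_div hb.le, ← hsbdef, ← hspdef]
    field_simp
  · rw [hD, Real.sqrt_div (by positivity : (0:ℝ) ≤ b * R), Real.sqrt_mul hb.le,
      ← hsbdef, ← hsrdef, ← hspdef]
    have e : (t ^ 2 - 1) = -(2 * sb * (1 - a + b) * u / (a * R)) := by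
      rw [← h1mt2]; ring
    rw [e]
    field_simp
  · rw [hD, ht, Real.sqrt_div ha.le, ← hsadef, ← hspdef, hdef, hsqsasr]
    field_simp
    linear_combination ((a-b)^2-1) * hsa2
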